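/- Let σ > 0, m > 0 and let φ : [0,T) → ℓ²(ℤ^N) be a twice continuously differentiable solution of the conservative DKG equation φ̈ − Δ_d φ + m φ − F(φ) = 0 with initial data φ(0) = φ₀, φ̇(0) = φ₁ satisfying H(0) ≤ 0 and (φ₀, φ₁)_{ℓ²} > 0. Then the solution cannot exist globally: necessarily T ≤ T* where T* = ‖φ₀‖²_{ℓ²} / (σ (φ₀, φ₁)_{ℓ²}); that is, ‖φ(t)‖²_{ℓ²} becomes unbounded on the finite interval (0, T*). -/

import Mathlib

noncomputable section

open scoped ENNReal InnerProductSpace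

/-- The lattice `ℤ^N`. -/
abbrev ZLat (N : ℕ) := Fin N → ℤ

/-- The space `ℓ²(ℤ^N)` of real square-summable sequences. -/
abbrev ellTwo (N : ℕ) := lp (fun _ : ZLat N => ℝ) 2

/-- The `κ`-th standard basis vector of `ℤ^N`. -/
def evec (N : ℕ) (κ : Fin N) : ZLat N := fun j => if j = κ then 1 else 0

lemma memℓp_shift {N : ℕ} (v : ZLat N) (φ : ellTwo N) :
    Memℓp (fun n => φ (n + v)) 2 := by
  have h2 : (0:ℝ) < (2 : ℝ≥0∞).toReal := by norm_num
  rw [memℓp_gen_iff h2]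
  have h := (memℓp_gen_iff h2).mp (lp.memℓp φ)
  exact ((Equiv.addRight v).summable_iff (f := fun n => ‖φ n‖ ^ (2:ℝ≥0∞).toReal)).2 h

/-- The shift operator `(S_v φ)_n = φ_{n+v}` on `ℓ²(ℤ^N)`. -/
def shiftOp {N : ℕ} (v : ZLat N) (φ : ellTwo N) : ellTwo N :=
  ⟨fun n => φ (n + v), memℓp_shift v φ⟩

/-- The forward difference operator `(∇⁺_κ φ)_n = φ_{n+e_κ} - φ_n`. -/
def fdiff {N : ℕ} (κ : Fin N) (φ : ellTwo N) : ellTwo N := shiftOp (evec N κ) φ - φ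

/-- The discrete Laplacian on `ℓ²(ℤ^N)`:
`(Δ_d φ)_n = Σ_κ (φ_{n+e_κ} + φ_{n-e_κ}) - 2N φ_n`. -/
def discLap {N : ℕ} (φ : ellTwo N) : ellTwo N :=
  (∑ κ : Fin N, (shiftOp (evec N κ) φ + shiftOp (-(evec N κ)) φ)) - ((2 * N : ℝ) • φ)

lemma memℓp_F {N : ℕ} (σ : ℝ) (hσ : 0 ≤ σ) (φ : ellTwo N) :
    Memℓp (fun n => |φ n| ^ (2 * σ) * φ n) 2 := by
  have h2 : (0:ℝ) < (2 : ℝ≥0∞).toReal := by norm_num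
  rw [memℓp_gen_iff h2]
  have hφ := (memℓp_gen_iff h2).mp (lp.memℓp φ)
  refine Summable.of_nonneg_of_le (fun n => Real.rpow_nonneg (norm_nonneg _) _)
    (f := fun n => (‖φ‖ ^ (2*σ)) ^ (2:ℝ≥0∞).toReal * ‖φ n‖ ^ (2:ℝ≥0∞).toReal) ?_ ?_
  · intro n
    have h1 : |φ n| ≤ ‖φ‖ := by
      simpa [Real.norm_eq_abs] using lp.norm_apply_le_norm (p := 2) (by norm_num) φ n
    have h0 : (0:ℝ) ≤ |φ n| := abs_nonneg _
    have hC : |φ n| ^ (2*σ) ≤ ‖φ‖ ^ (2*σ) := Real.rpow_le_rpow h0 h1 (by positivity)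
    have hb : ‖|φ n| ^ (2*σ) * φ n‖ ≤ ‖φ‖ ^ (2*σ) * ‖φ n‖ := by
      rw [norm_mul, Real.norm_eq_abs, abs_of_nonneg (Real.rpow_nonneg h0 _)]
      exact mul_le_mul_of_nonneg_right hC (norm_nonneg _)
    calc ‖|φ n| ^ (2*σ) * φ n‖ ^ (2:ℝ≥0∞).toReal
        ≤ (‖φ‖ ^ (2*σ) * ‖φ n‖) ^ (2:ℝ≥0∞).toReal :=
          Real.rpow_le_rpow (norm_nonneg _) hb (by norm_num)
      _ = (‖φ‖ ^ (2*σ)) ^ (2:ℝ≥0∞).toReal * ‖φ n‖ ^ (2:ℝ≥0∞).toReal :=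
          Real.mul_rpow (Real.rpow_nonneg (norm_nonneg _) _) (norm_nonneg _)
  · exact hφ.mul_left _


section AuxA
variable {N : ℕ}

lemma shiftOp_apply (v : ZLat N) (φ : ellTwo N) (n : ZLat N) : shiftOp v φ n = φ (n + v) := rfl

lemma inner_ellTwo (f g : ellTwo N) : ⟪f, g⟫_ℝ = ∑' n, f n * g n := by
  rw [lp.inner_eq_tsum]
  exact tsum_congr fun n => by rw [RCLike.inner_apply', conj_trivial]

lemma summable_inner_ellTwo (f g : ellTwo N) : Summable (fun n => f n * g n) :=
  (lp.summable_inner f g).congr fun n => by rw [RCLike.inner_apply', conj_trivial]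

lemma inner_shift_right (f g : ellTwo N) (v : ZLat N) :
    ⟪f, shiftOp v g⟫_ℝ = ⟪shiftOp (-v) f, g⟫_ℝ := by
  rw [inner_ellTwo, inner_ellTwo]
  refine Eq.trans ?_ (Equiv.tsum_eq (Equiv.addRight v) (fun n => f (n + -v) * g n))
  refine tsum_congr fun n => ?_
  simp [shiftOp_apply, Equiv.coe_addRight, add_neg_cancel_right]

lemma shiftOp_shiftOp (v : ZLat N) (g : ellTwo N) : shiftOp (-v) (shiftOp v g) = g := by
  apply lp.ext; funext n; simp [shiftOp_apply]


/-- shift as a linear isometry -/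
def shiftLI (v : ZLat N) : ellTwo N →ₗᵢ[ℝ] ellTwo N where
  toFun := shiftOp v
  map_add' f g := by apply lp.ext; funext n; simp [shiftOp_apply, lp.coeFn_add]
  map_smul' c f := by apply lp.ext; funext n; simp [shiftOp_apply, lp.coeFn_smul]
  norm_map' f := by
    have h : ⟪shiftOp v f, shiftOp v f⟫_ℝ = ⟪f, f⟫_ℝ := by
      rw [inner_shift_right, shiftOp_shiftOp]
    have h2 := h
    rw [real_inner_self_eq_norm_sq, real_inner_self_eq_norm_sq] at h2
    have := congrArg Real.sqrt h2
    simpa [Real.sqrt_sq, norm_nonneg] using this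

def shiftCLM (v : ZLat N) : ellTwo N →L[ℝ] ellTwo N :=
  (shiftLI v).toContinuousLinearMap

lemma shiftCLM_apply (v : ZLat N) (φ : ellTwo N) : shiftCLM v φ = shiftOp v φ := rfl

def fdiffCLM (κ : Fin N) : ellTwo N →L[ℝ] ellTwo N :=
  shiftCLM (evec N κ) - ContinuousLinearMap.id ℝ _

lemma fdiffCLM_apply (κ : Fin N) (φ : ellTwo N) : fdiffCLM κ φ = fdiff κ φ := rfl

def discLapCLM (N : ℕ) : ellTwo N →L[ℝ] ellTwo N :=
  (∑ κ : Fin N, (shiftCLM (evec N κ) + shiftCLM (-(evec N κ))))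
    - (2 * N : ℝ) • ContinuousLinearMap.id ℝ _

lemma discLapCLM_apply (φ : ellTwo N) : discLapCLM N φ = discLap φ := by
  simp [discLapCLM, discLap, ContinuousLinearMap.sum_apply, shiftCLM_apply]

lemma inner_shift_left (f g : ellTwo N) (v : ZLat N) :
    ⟪shiftOp v f, g⟫_ℝ = ⟪f, shiftOp (-v) g⟫_ℝ := by
  have := inner_shift_right f g (-v)
  rw [neg_neg] at this
  exact this.symm

lemma inner_fdiff (f g : ellTwo N) (κ : Fin N) :
    ⟪fdiff κ f, fdiff κ g⟫_ℝ
      = 2 * ⟪f, g⟫_ℝ - ⟪f, shiftOp (evec N κ) g⟫_ℝ - ⟪f, shiftOp (-(evec N κ)) g⟫_ℝ := by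
  have hSS : ⟪shiftOp (evec N κ) f, shiftOp (evec N κ) g⟫_ℝ = ⟪f, g⟫_ℝ := by
    rw [inner_shift_left, shiftOp_shiftOp]
  have hSf : ⟪shiftOp (evec N κ) f, g⟫_ℝ = ⟪f, shiftOp (-(evec N κ)) g⟫_ℝ :=
    inner_shift_left f g _
  simp only [fdiff, inner_sub_left, inner_sub_right, hSS, hSf]
  ring

lemma inner_discLap (f g : ellTwo N) :
    ⟪f, discLap g⟫_ℝ = -∑ κ : Fin N, ⟪fdiff κ f, fdiff κ g⟫_ℝ := by
  simp only [discLap, inner_sub_right, inner_sum, inner_add_right, inner_smul_right,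
    inner_fdiff]
  rw [Finset.sum_sub_distrib, Finset.sum_sub_distrib, Finset.sum_const,
    Finset.sum_add_distrib]
  simp [Finset.card_univ]
  ring

end AuxA

section AuxB
variable {q : ℝ}

lemma sq_rpow (x s : ℝ) : (x^2 : ℝ) ^ s = |x| ^ (2*s) := by
  rw [← sq_abs, ← Real.rpow_natCast |x| 2, ← Real.rpow_mul (abs_nonneg x)]
  norm_num

lemma abs_rpow_add_two (hq : 0 ≤ q) (x : ℝ) : |x| ^ (q+2) = |x| ^ q * x^2 := by
  rcases eq_or_ne x 0 with rfl | hx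
  · rw [abs_zero, Real.zero_rpow (by positivity)]
    simp
  · rw [Real.rpow_add (abs_pos.2 hx), Real.rpow_two, sq_abs]

lemma hasDerivAt_abs_rpow' (hq : 0 ≤ q) (x : ℝ) :
    HasDerivAt (fun x : ℝ => |x| ^ (q+2)) ((q+2) * (|x| ^ q * x)) x := by
  have h := hasDerivAt_abs_rpow x (p := q+2) (by linarith)
  have : (q+2) * |x| ^ (q+2-2) * x = (q+2) * (|x| ^ q * x) := by
    norm_num
    ring
  rwa [this] at h

lemma hasDerivAt_abs_rpow_mul (hq : 0 < q) (x : ℝ) :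
    HasDerivAt (fun x : ℝ => |x| ^ q * x) ((q+1) * |x| ^ q) x := by
  rcases eq_or_ne x 0 with rfl | hx
  · rw [abs_zero, Real.zero_rpow hq.ne', mul_zero]
    rw [hasDerivAt_iff_isLittleO]
    simp only [abs_zero, Real.zero_rpow hq.ne', zero_mul, smul_zero, sub_zero, mul_zero]
    refine Asymptotics.isLittleO_iff.2 fun c hc => ?_
    have ht : Filter.Tendsto (fun h : ℝ => |h| ^ q) (nhds 0) (nhds 0) := by
      have hcont : Continuous fun h : ℝ => |h| ^ q :=
        continuous_abs.rpow_const (fun x => Or.inr hq.le)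
      have := hcont.tendsto 0
      simpa [Real.zero_rpow hq.ne'] using this
    filter_upwards [ht.eventually_lt_const hc] with h hh
    have h0 : (0:ℝ) ≤ |h| ^ q := Real.rpow_nonneg (abs_nonneg _) _
    rw [Real.norm_eq_abs, Real.norm_eq_abs]
    calc abs (|h| ^ q * h) = |h| ^ q * |h| := by
          rw [abs_mul, abs_of_nonneg h0]
      _ ≤ c * |h| := mul_le_mul_of_nonneg_right hh.le (abs_nonneg _)
  · have h1 : HasDerivAt (fun x : ℝ => x^2) (2*x) x := by simpa using hasDerivAt_pow 2 x
    have h2 := (h1.rpow_const (p := q/2) (Or.inl (pow_ne_zero 2 hx))).mul (hasDerivAt_id x)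
    simp only [id_eq] at h2
    have hfun : (fun x : ℝ => (x^2) ^ (q/2) * x) = fun x : ℝ => |x| ^ q * x := by
      funext y
      rw [sq_rpow]
      ring_nf
    have hval : 2*x * (q/2) * (x^2) ^ (q/2 - 1) * x + (x^2) ^ (q/2) * 1
        = (q+1) * |x| ^ q := by
      have e1 : (x^2 : ℝ) ^ (q/2 - 1) * (x^2) = (x^2) ^ (q/2) := by
        nth_rewrite 2 [← Real.rpow_one (x^2)]
        rw [← Real.rpow_add (by positivity : (0:ℝ) < x^2)]
        ring_nf
      have e2 : (x^2 : ℝ) ^ (q/2) = |x| ^ q := by rw [sq_rpow]; ring_nf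
      calc 2*x * (q/2) * (x^2) ^ (q/2 - 1) * x + (x^2) ^ (q/2) * 1
          = q * ((x^2) ^ (q/2 - 1) * (x^2)) + (x^2) ^ (q/2) := by ring
        _ = (q+1) * |x| ^ q := by rw [e1, e2]; ring
    rw [show ((fun y : ℝ => (y ^ 2) ^ (q / 2)) * id) = fun x : ℝ => (x^2) ^ (q/2) * x from rfl,
      hfun] at h2
    rw [← hval]
    exact h2

lemma lip_abs_rpow_mul (hq : 0 < q) {M x y : ℝ} (hx : |x| ≤ M) (hy : |y| ≤ M) :
    abs (|x| ^ q * x - |y| ^ q * y) ≤ (q+1) * M ^ q * |x - y| := by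
  have hM : 0 ≤ M := le_trans (abs_nonneg x) hx
  have key := Convex.norm_image_sub_le_of_norm_hasDerivWithin_le
    (f := fun z : ℝ => |z| ^ q * z) (f' := fun z : ℝ => (q+1) * |z| ^ q)
    (s := Set.Icc (-M) M) (C := (q+1) * M ^ q)
    (fun z _ => (hasDerivAt_abs_rpow_mul hq z).hasDerivWithinAt)
    (fun z hz => by
      rw [Real.norm_eq_abs, abs_of_nonneg (by positivity)]
      have : |z| ≤ M := abs_le.2 hz
      exact mul_le_mul_of_nonneg_left
        (Real.rpow_le_rpow (abs_nonneg _) this hq.le) (by linarith))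
    (convex_Icc _ _) (abs_le.1 hy) (abs_le.1 hx)
  simpa [Real.norm_eq_abs] using key

lemma key_pointwise (hq : 0 < q) (a h : ℝ) :
    abs (|a+h| ^ (q+2) - |a| ^ (q+2) - (q+2) * (|a| ^ q * a) * h)
      ≤ (q+2) * (q+1) * (|a|+|h|) ^ q * h^2 := by
  set M := |a| + |h| with hM
  have hM0 : 0 ≤ M := by positivity
  set k : ℝ → ℝ := fun t => |a + t*h| ^ (q+2) - (q+2) * (|a| ^ q * a) * (t*h) with hk
  have hderiv : ∀ t : ℝ, HasDerivAt k
      ((q+2) * (|a + t*h| ^ q * (a + t*h)) * h - (q+2) * (|a| ^ q * a) * h) t := by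
    intro t
    have hin : HasDerivAt (fun t : ℝ => a + t*h) h t := by
      simpa using (hasDerivAt_mul_const h).const_add a
    have h1 := (hasDerivAt_abs_rpow' hq.le (a + t*h)).comp t hin
    have h2 : HasDerivAt (fun t : ℝ => (q+2) * (|a| ^ q * a) * (t*h))
        ((q+2) * (|a| ^ q * a) * h) t := by
      simpa using ((hasDerivAt_mul_const h).const_mul ((q+2) * (|a| ^ q * a)))
    exact h1.sub h2
  have hbound : ∀ t ∈ Set.Icc (0:ℝ) 1,
      ‖(q+2) * (|a + t*h| ^ q * (a + t*h)) * h - (q+2) * (|a| ^ q * a) * h‖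
        ≤ (q+2) * ((q+1) * M ^ q * |h|) * |h| := by
    intro t ht
    have h1 : |a + t*h| ≤ M := by
      calc |a + t*h| ≤ |a| + |t*h| := abs_add_le _ _
        _ ≤ |a| + |h| := by
            rw [abs_mul]
            nlinarith [abs_nonneg h, abs_of_nonneg ht.1, ht.2]
    have h2 : |a| ≤ M := by
      have := abs_nonneg h
      simp only [hM]
      linarith
    have hlip := lip_abs_rpow_mul hq h1 h2
    have h3 : a + t*h - a = t*h := by ring
    have h4 : |t*h| ≤ |h| := by
      rw [abs_mul]
      nlinarith [abs_nonneg h, abs_of_nonneg ht.1, ht.2]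
    rw [h3] at hlip
    rw [Real.norm_eq_abs]
    calc abs ((q+2) * (|a + t*h| ^ q * (a + t*h)) * h - (q+2) * (|a| ^ q * a) * h)
        = (q+2) * abs (|a + t*h| ^ q * (a + t*h) - |a| ^ q * a) * |h| := by
          rw [show (q+2) * (|a + t*h| ^ q * (a + t*h)) * h - (q+2) * (|a| ^ q * a) * h
            = ((q+2)) * ((|a + t*h| ^ q * (a + t*h) - |a| ^ q * a) * h) by ring]
          rw [abs_mul, abs_mul, abs_of_nonneg (by linarith : (0:ℝ) ≤ q+2)]
          ring
      _ ≤ (q+2) * ((q+1) * M ^ q * |h|) * |h| := by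
          have hb : abs (|a + t*h| ^ q * (a + t*h) - |a| ^ q * a) ≤ (q+1) * M ^ q * |h| :=
            hlip.trans (mul_le_mul_of_nonneg_left h4 (by positivity))
          have hh := abs_nonneg h
          exact mul_le_mul_of_nonneg_right
            (mul_le_mul_of_nonneg_left hb (by linarith : (0:ℝ) ≤ q+2)) hh
  have key := Convex.norm_image_sub_le_of_norm_hasDerivWithin_le
    (f := k) (f' := fun t => (q+2) * (|a + t*h| ^ q * (a + t*h)) * h - (q+2) * (|a| ^ q * a) * h)
    (s := Set.Icc (0:ℝ) 1) (C := (q+2) * ((q+1) * M ^ q * |h|) * |h|)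
    (fun t _ => (hderiv t).hasDerivWithinAt) hbound (convex_Icc _ _)
    (Set.left_mem_Icc.2 zero_le_one) (Set.right_mem_Icc.2 zero_le_one)
  have hk1 : k 1 = |a+h| ^ (q+2) - (q+2) * (|a| ^ q * a) * h := by simp [hk]
  have hk0 : k 0 = |a| ^ (q+2) := by simp [hk]
  rw [hk1, hk0] at key
  simp only [Real.norm_eq_abs] at key
  calc abs (|a+h| ^ (q+2) - |a| ^ (q+2) - (q+2) * (|a| ^ q * a) * h)
      = abs (|a+h| ^ (q+2) - (q+2) * (|a| ^ q * a) * h - |a| ^ (q+2)) := by ring_nf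
    _ ≤ (q+2) * ((q+1) * M ^ q * |h|) * |h| * |1 - 0| := key
    _ = (q+2) * (q+1) * M ^ q * h^2 := by
        have hhh : |h| * |h| = h ^ 2 := by rw [abs_mul_abs_self, sq]
        rw [show |1 - (0:ℝ)| = 1 by norm_num, mul_one]
        rw [show (q+2) * ((q+1) * M ^ q * |h|) * |h|
          = (q+2) * (q+1) * M ^ q * (|h| * |h|) by ring, hhh]

end AuxB

/-- The power-law nonlinearity `(F(φ))_n = |φ_n|^{2σ} φ_n` as a map on `ℓ²(ℤ^N)`. -/
def Fpow {N : ℕ} (σ : ℝ) (hσ : 0 ≤ σ) (φ : ellTwo N) : ellTwo N :=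
  ⟨fun n => |φ n| ^ (2 * σ) * φ n, memℓp_F σ hσ φ⟩


section AuxC
set_option maxHeartbeats 1000000
set_option synthInstance.maxHeartbeats 400000
variable {N : ℕ}

lemma abs_le_norm_ellTwo (f : ellTwo N) (n : ZLat N) : |f n| ≤ ‖f‖ := by
  simpa [Real.norm_eq_abs] using lp.norm_apply_le_norm (p := (2:ℝ≥0∞)) (by norm_num) f n

lemma norm_sq_ellTwo (f : ellTwo N) : ∑' n, f n * f n = ‖f‖^2 := by
  rw [← inner_ellTwo, real_inner_self_eq_norm_sq]

lemma summable_abs_rpow_ellTwo {q : ℝ} (hq : 0 ≤ q) (f : ellTwo N) :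
    Summable (fun n => |f n| ^ (q+2)) := by
  refine Summable.of_nonneg_of_le (fun n => Real.rpow_nonneg (abs_nonneg _) _) (fun n => ?_)
    ((summable_inner_ellTwo f f).mul_left (‖f‖^q))
  rw [abs_rpow_add_two hq]
  have h1 : |f n| ^ q ≤ ‖f‖ ^ q :=
    Real.rpow_le_rpow (abs_nonneg _) (abs_le_norm_ellTwo f n) hq
  have h2 : f n * f n = (f n)^2 := (sq (f n)).symm
  rw [h2]
  exact mul_le_mul_of_nonneg_right h1 (sq_nonneg _)

lemma Fpow_apply (σ : ℝ) (hσ : 0 ≤ σ) (f : ellTwo N) (n : ZLat N) :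
    Fpow σ hσ f n = |f n| ^ (2*σ) * f n := rfl

lemma hasFDerivAt_G (σ : ℝ) (hσ : 0 < σ) (ψ : ellTwo N) :
    HasFDerivAt (fun φ : ellTwo N => ∑' n, |φ n| ^ (2*σ+2))
      ((2*σ+2) • (innerSL ℝ (Fpow σ hσ.le ψ))) ψ := by
  set q := 2*σ with hqdef
  have hq : 0 < q := by positivity
  rw [hasFDerivAt_iff_isLittleO_nhds_zero]
  have hbig : (fun h : ellTwo N => (∑' n, |(ψ + h) n| ^ (q+2)) - (∑' n, |ψ n| ^ (q+2))
      - ((q+2) • (innerSL ℝ (Fpow σ hσ.le ψ))) h)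
      =O[nhds 0] (fun h : ellTwo N => ‖h‖^2) := by
    rw [Asymptotics.isBigO_iff]
    refine ⟨(q+2)*((q+1)*(‖ψ‖+1)^q), ?_⟩
    have hball : ∀ᶠ h : ellTwo N in nhds 0, ‖h‖ ≤ 1 := by
      have := Metric.ball_mem_nhds (0 : ellTwo N) one_pos
      filter_upwards [this] with h hh
      rw [Metric.mem_ball, dist_zero_right] at hh
      exact hh.le
    filter_upwards [hball] with h hh
    set C : ℝ := (q+2)*((q+1)*(‖ψ‖+1)^q) with hC
    have hC0 : 0 ≤ (q+1)*(‖ψ‖+1)^q := by positivity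
    -- summabilities
    have SA : Summable (fun n => |(ψ + h) n| ^ (q+2)) := summable_abs_rpow_ellTwo hq.le _
    have SB : Summable (fun n => |ψ n| ^ (q+2)) := summable_abs_rpow_ellTwo hq.le ψ
    have SCpre : Summable (fun n => (Fpow σ hσ.le ψ) n * h n) :=
      summable_inner_ellTwo _ h
    have SC : Summable (fun n => (q+2) * ((|ψ n| ^ q * ψ n) * h n)) := by
      have := SCpre.mul_left (q+2)
      simpa [Fpow_apply, hqdef] using this
    have hsplit : (∑' n, |(ψ + h) n| ^ (q+2)) - (∑' n, |ψ n| ^ (q+2))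
        - ((q+2) • (innerSL ℝ (Fpow σ hσ.le ψ))) h
        = ∑' n, (|(ψ + h) n| ^ (q+2) - |ψ n| ^ (q+2) - (q+2) * ((|ψ n| ^ q * ψ n) * h n)) := by
      rw [ContinuousLinearMap.smul_apply, innerSL_apply_apply, inner_ellTwo]
      rw [smul_eq_mul, ← tsum_mul_left]
      rw [← Summable.tsum_sub SA SB, ← Summable.tsum_sub (SA.sub SB) ?_]
      · refine tsum_congr fun n => ?_
        simp only [Fpow_apply, ← hqdef]
        try ring_nf
      · simpa [Fpow_apply, hqdef] using SCpre.mul_left (q+2)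
    rw [hsplit]
    have hterm : ∀ n, abs (|(ψ + h) n| ^ (q+2) - |ψ n| ^ (q+2)
          - (q+2) * ((|ψ n| ^ q * ψ n) * h n))
        ≤ ((q+1)*(‖ψ‖+1)^q * (q+2)) * (h n * h n) := by
      intro n
      have hadd : (ψ + h) n = ψ n + h n := by
        rw [lp.coeFn_add]; rfl
      have key := key_pointwise hq (ψ n) (h n)
      rw [← hadd] at key
      have hMb : (|ψ n| + |h n|) ^ q ≤ (‖ψ‖+1) ^ q := by
        refine Real.rpow_le_rpow (by positivity) ?_ hq.le
        have := abs_le_norm_ellTwo ψ n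
        have h2 := (abs_le_norm_ellTwo h n).trans hh
        linarith
      calc abs (|(ψ + h) n| ^ (q+2) - |ψ n| ^ (q+2) - (q+2) * ((|ψ n| ^ q * ψ n) * h n))
          = abs (|(ψ + h) n| ^ (q+2) - |ψ n| ^ (q+2) - (q+2) * (|ψ n| ^ q * ψ n) * (h n)) := by
            ring_nf
        _ ≤ (q+2) * (q+1) * (|ψ n| + |h n|) ^ q * (h n)^2 := key
        _ ≤ ((q+1)*(‖ψ‖+1)^q * (q+2)) * (h n * h n) := by
            rw [← sq]
            have := mul_le_mul_of_nonneg_left hMb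
              (by positivity : (0:ℝ) ≤ (q+2)*(q+1))
            have h3 := mul_le_mul_of_nonneg_right
              (by linarith [this] : (q+2) * (q+1) * (|ψ n| + |h n|) ^ q
                ≤ (q+1)*(‖ψ‖+1)^q * (q+2)) (sq_nonneg (h n))
            linarith [h3]
    have habs : Summable (fun n =>
        abs (|(ψ + h) n| ^ (q+2) - |ψ n| ^ (q+2) - (q+2) * ((|ψ n| ^ q * ψ n) * h n))) := by
      exact ((SA.sub SB).sub SC).abs
    have h1 : ‖∑' n, (|(ψ + h) n| ^ (q+2) - |ψ n| ^ (q+2)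
          - (q+2) * ((|ψ n| ^ q * ψ n) * h n))‖
        ≤ ∑' n, abs (|(ψ + h) n| ^ (q+2) - |ψ n| ^ (q+2)
          - (q+2) * ((|ψ n| ^ q * ψ n) * h n)) := by
      have habs' : Summable (fun n => ‖|(ψ + h) n| ^ (q+2) - |ψ n| ^ (q+2)
          - (q+2) * ((|ψ n| ^ q * ψ n) * h n)‖) := by
        simpa only [Real.norm_eq_abs] using habs
      simpa only [Real.norm_eq_abs] using norm_tsum_le_tsum_norm habs'
    have h2 : ∑' n, abs (|(ψ + h) n| ^ (q+2) - |ψ n| ^ (q+2)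
          - (q+2) * ((|ψ n| ^ q * ψ n) * h n))
        ≤ ((q+1)*(‖ψ‖+1)^q * (q+2)) * ‖h‖^2 := by
      have := Summable.tsum_le_tsum hterm habs (((summable_inner_ellTwo h h)).mul_left _)
      rw [tsum_mul_left, norm_sq_ellTwo] at this
      exact this
    rw [Real.norm_eq_abs (‖h‖^2), abs_of_nonneg (sq_nonneg _)]
    calc ‖∑' n, (|(ψ + h) n| ^ (q+2) - |ψ n| ^ (q+2)
          - (q+2) * ((|ψ n| ^ q * ψ n) * h n))‖
        ≤ ((q+1)*(‖ψ‖+1)^q * (q+2)) * ‖h‖^2 := h1.trans h2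
      _ = C * ‖h‖^2 := by rw [hC]; ring
  refine hbig.trans_isLittleO ?_
  simpa using Asymptotics.isLittleO_norm_pow_id (E' := ellTwo N) (n := 2) one_lt_two

end AuxC

/-- The Hamiltonian (total energy)
`H(t) = ½‖φ̇(t)‖² + ½(Σ_κ ‖∇⁺_κ φ(t)‖² + m‖φ(t)‖²) - (1/(2σ+2)) Σ_n |φ_n(t)|^{2σ+2}`. -/
def energyH {N : ℕ} (σ m : ℝ) (φ φ' : ℝ → ellTwo N) (t : ℝ) : ℝ :=
  1/2 * ‖φ' t‖ ^ 2
    + 1/2 * (∑ κ : Fin N, ‖fdiff κ (φ t)‖ ^ 2 + m * ‖φ t‖ ^ 2)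
    - (1/(2*σ+2)) * ∑' n : ZLat N, |(φ t) n| ^ (2*σ+2)


section AuxD
set_option maxHeartbeats 1600000
set_option synthInstance.maxHeartbeats 400000
variable {N : ℕ}

lemma hasDerivWithinAt_norm_sq {f : ℝ → ellTwo N} {v : ellTwo N} {s : Set ℝ} {t : ℝ}
    (hf : HasDerivWithinAt f v s t) :
    HasDerivWithinAt (fun u => ‖f u‖^2) (2 * ⟪f t, v⟫_ℝ) s t := by
  have h := HasDerivWithinAt.inner ℝ hf hf
  have heqf : (fun u => ⟪f u, f u⟫_ℝ) = fun u => ‖f u‖^2 := by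
    funext u
    rw [real_inner_self_eq_norm_sq]
  rw [heqf] at h
  have e : 2 * ⟪f t, v⟫_ℝ = ⟪f t, v⟫_ℝ + ⟪v, f t⟫_ℝ := by rw [real_inner_comm v (f t)]; ring
  rw [e]
  exact h

lemma inner_Fpow (σ : ℝ) (hσ : 0 < σ) (f : ellTwo N) :
    ⟪f, Fpow σ hσ.le f⟫_ℝ = ∑' n, |f n| ^ (2*σ+2) := by
  rw [inner_ellTwo]
  refine tsum_congr fun n => ?_
  rw [Fpow_apply, abs_rpow_add_two (by positivity : (0:ℝ) ≤ 2*σ)]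
  ring

end AuxD

set_option maxHeartbeats 4000000
set_option synthInstance.maxHeartbeats 400000

/-- Global nonexistence for the conservative DKG equation with `H(0) ≤ 0` and
`(φ₀,φ₁)_{ℓ²} > 0`: any solution on `[0,T)` must have
`T ≤ T* = ‖φ₀‖²/(σ (φ₀,φ₁)_{ℓ²})`. -/
theorem dkg_global_nonexistence (N : ℕ) (σ m T : ℝ) (hσ : 0 < σ) (hm : 0 < m)
    (hT : 0 < T) (φ φ' φ'' : ℝ → ellTwo N) (φ₀ φ₁ : ellTwo N)
    (hd1 : ∀ t ∈ Set.Ico (0:ℝ) T, HasDerivWithinAt φ (φ' t) (Set.Ico (0:ℝ) T) t)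
    (hd2 : ∀ t ∈ Set.Ico (0:ℝ) T, HasDerivWithinAt φ' (φ'' t) (Set.Ico (0:ℝ) T) t)
    (hcont : ContinuousOn φ'' (Set.Ico (0:ℝ) T))
    (heq : ∀ t ∈ Set.Ico (0:ℝ) T,
      φ'' t - discLap (φ t) + m • φ t - Fpow σ hσ.le (φ t) = 0)
    (hinit0 : φ 0 = φ₀) (hinit1 : φ' 0 = φ₁)
    (hH0 : energyH σ m φ φ' 0 ≤ 0)
    (hip : 0 < ⟪φ₀, φ₁⟫_ℝ) :
    T ≤ ‖φ₀‖ ^ 2 / (σ * ⟪φ₀, φ₁⟫_ℝ) := by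
  classical
  have h2σ : (0:ℝ) < 2*σ+2 := by linarith
  set s : Set ℝ := Set.Ico (0:ℝ) T with hsdef
  have hconv : Convex ℝ s := convex_Ico 0 T
  have h0s : (0:ℝ) ∈ s := ⟨le_refl 0, hT⟩
  have hUD : UniqueDiffOn ℝ s := uniqueDiffOn_Ico 0 T
  have hints : interior s ⊆ s := interior_subset
  -- rearranged equation
  have heq' : ∀ t ∈ s, φ'' t = discLap (φ t) - m • φ t + Fpow σ hσ.le (φ t) := by
    intro t ht
    have h := heq t ht
    have h2 : φ'' t - (discLap (φ t) - m • φ t + Fpow σ hσ.le (φ t))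
        = φ'' t - discLap (φ t) + m • φ t - Fpow σ hσ.le (φ t) := by abel
    have h3 : φ'' t - (discLap (φ t) - m • φ t + Fpow σ hσ.le (φ t)) = 0 := by rw [h2, h]
    exact sub_eq_zero.mp h3
  -- energy is constant
  have hEderiv : ∀ t ∈ s, HasDerivWithinAt (energyH σ m φ φ') 0 s t := by
    intro t ht
    have hdφ := hd1 t ht
    have hdφ' := hd2 t ht
    have h1 : HasDerivWithinAt (fun u => 1/2 * ‖φ' u‖^2) (⟪φ' t, φ'' t⟫_ℝ) s t := by
      have := (hasDerivWithinAt_norm_sq hdφ').const_mul (1/2 : ℝ)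
      rw [show ⟪φ' t, φ'' t⟫_ℝ = 1/2 * (2 * ⟪φ' t, φ'' t⟫_ℝ) by ring]
      exact this
    have h2 : ∀ κ : Fin N, HasDerivWithinAt (fun u => ‖fdiff κ (φ u)‖^2)
        (2 * ⟪fdiff κ (φ t), fdiff κ (φ' t)⟫_ℝ) s t := by
      intro κ
      have hfd : HasDerivWithinAt (fun u => fdiff κ (φ u)) (fdiff κ (φ' t)) s t := by
        have := ((fdiffCLM κ).hasFDerivAt (x := φ t)).comp_hasDerivWithinAt t hdφ
        exact this
      exact hasDerivWithinAt_norm_sq hfd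
    have h3 : HasDerivWithinAt (fun u => ∑ κ : Fin N, ‖fdiff κ (φ u)‖^2)
        (∑ κ : Fin N, 2 * ⟪fdiff κ (φ t), fdiff κ (φ' t)⟫_ℝ) s t :=
      HasDerivWithinAt.fun_sum (fun κ _ => h2 κ)
    have h4 : HasDerivWithinAt (fun u => ‖φ u‖^2) (2*⟪φ t, φ' t⟫_ℝ) s t :=
      hasDerivWithinAt_norm_sq hdφ
    have h5 : HasDerivWithinAt (fun u => ∑' n, |(φ u) n| ^ (2*σ+2))
        ((2*σ+2) * ⟪Fpow σ hσ.le (φ t), φ' t⟫_ℝ) s t := by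
      have := (hasFDerivAt_G σ hσ (φ t)).comp_hasDerivWithinAt t hdφ
      simp only [ContinuousLinearMap.smul_apply, innerSL_apply_apply, smul_eq_mul] at this
      exact this
    have htot : HasDerivWithinAt (energyH σ m φ φ')
        (⟪φ' t, φ'' t⟫_ℝ
          + 1/2 * ((∑ κ : Fin N, 2 * ⟪fdiff κ (φ t), fdiff κ (φ' t)⟫_ℝ)
              + m * (2*⟪φ t, φ' t⟫_ℝ))
          - (1/(2*σ+2)) * ((2*σ+2) * ⟪Fpow σ hσ.le (φ t), φ' t⟫_ℝ)) s t := by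
      have := (h1.add ((h3.add (h4.const_mul m)).const_mul (1/2 : ℝ))).sub
        (h5.const_mul (1/(2*σ+2) : ℝ))
      exact this
    have hval : (⟪φ' t, φ'' t⟫_ℝ
          + 1/2 * ((∑ κ : Fin N, 2 * ⟪fdiff κ (φ t), fdiff κ (φ' t)⟫_ℝ)
              + m * (2*⟪φ t, φ' t⟫_ℝ))
          - (1/(2*σ+2)) * ((2*σ+2) * ⟪Fpow σ hσ.le (φ t), φ' t⟫_ℝ)) = 0 := by
      have hpe : ⟪φ' t, φ'' t⟫_ℝ
          = -(∑ κ : Fin N, ⟪fdiff κ (φ' t), fdiff κ (φ t)⟫_ℝ)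
            - m * ⟪φ' t, φ t⟫_ℝ + ⟪φ' t, Fpow σ hσ.le (φ t)⟫_ℝ := by
        rw [heq' t ht, inner_add_right, inner_sub_right, real_inner_smul_right,
          inner_discLap]
      have hsumc : (∑ κ : Fin N, 2 * ⟪fdiff κ (φ t), fdiff κ (φ' t)⟫_ℝ)
          = 2 * ∑ κ : Fin N, ⟪fdiff κ (φ' t), fdiff κ (φ t)⟫_ℝ := by
        rw [Finset.mul_sum]
        exact Finset.sum_congr rfl fun κ _ => by rw [real_inner_comm]
      have hc1 : ⟪φ t, φ' t⟫_ℝ = ⟪φ' t, φ t⟫_ℝ := real_inner_comm _ _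
      have hc2 : ⟪Fpow σ hσ.le (φ t), φ' t⟫_ℝ = ⟪φ' t, Fpow σ hσ.le (φ t)⟫_ℝ :=
        real_inner_comm _ _
      rw [hpe, hsumc, hc1, hc2]
      field_simp
      ring
    rw [hval] at htot
    exact htot
  have hEconst : ∀ t ∈ s, energyH σ m φ φ' t ≤ 0 := by
    intro t ht
    have hdiff : DifferentiableOn ℝ (energyH σ m φ φ') s :=
      fun u hu => (hEderiv u hu).differentiableWithinAt
    have hfz : ∀ u ∈ s, fderivWithin ℝ (energyH σ m φ φ') s u = 0 := by
      intro u hu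
      have := (hEderiv u hu).hasFDerivWithinAt.fderivWithin (hUD u hu)
      rw [this]
      ext w
      simp
    have := hconv.is_const_of_fderivWithin_eq_zero hdiff hfz ht h0s
    rw [this]
    exact hH0
  -- the basic functions
  set y : ℝ → ℝ := fun u => ‖φ u‖^2 with hydef
  set B : ℝ → ℝ := fun u => 2*⟪φ u, φ' u⟫_ℝ with hBdef
  set c : ℝ → ℝ := fun u => 2*‖φ' u‖^2 + 2*⟪φ u, φ'' u⟫_ℝ with hcdef
  have hyd : ∀ t ∈ s, HasDerivWithinAt y (B t) s t :=
    fun t ht => hasDerivWithinAt_norm_sq (hd1 t ht)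
  have hBd : ∀ t ∈ s, HasDerivWithinAt B (c t) s t := by
    intro t ht
    have h := (HasDerivWithinAt.inner ℝ (hd1 t ht) (hd2 t ht)).const_mul (2:ℝ)
    have e : c t = 2 * (⟪φ t, φ'' t⟫_ℝ + ⟪φ' t, φ' t⟫_ℝ) := by
      rw [hcdef]
      simp only [← real_inner_self_eq_norm_sq]
      ring
    rw [e]
    exact h
  -- key inequalities
  have hkey : ∀ t ∈ s, (2*σ+4) * ‖φ' t‖^2 ≤ c t ∧ (σ/2+1) * (B t)^2 ≤ y t * c t := by
    intro t ht
    set K : ℝ := ∑ κ : Fin N, ‖fdiff κ (φ t)‖^2 with hKdef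
    set G : ℝ := ∑' n, |(φ t) n| ^ (2*σ+2) with hGdef
    have hK0 : 0 ≤ K := Finset.sum_nonneg fun κ _ => sq_nonneg _
    have hy0 : 0 ≤ y t := sq_nonneg _
    have hφ'0 : 0 ≤ ‖φ' t‖^2 := sq_nonneg _
    have hyy : y t = ‖φ t‖^2 := rfl
    have hG_ge : (σ+1) * (‖φ' t‖^2 + K + m * y t) ≤ G := by
      have hE := hEconst t ht
      unfold energyH at hE
      rw [← hKdef, ← hGdef] at hE
      have hA : 1/2*‖φ' t‖^2 + 1/2*(K + m*‖φ t‖^2) ≤ (1/(2*σ+2))*G := by linarith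
      have h3 := mul_le_mul_of_nonneg_left hA h2σ.le
      have h4 : (2*σ+2) * ((1/(2*σ+2))*G) = G := by field_simp
      have h5 : (2*σ+2) * (1/2*‖φ' t‖^2 + 1/2*(K + m*‖φ t‖^2))
          = (σ+1)*(‖φ' t‖^2 + K + m*‖φ t‖^2) := by ring
      rw [hyy]
      linarith
    have hinn : ⟪φ t, φ'' t⟫_ℝ = -K - m * y t + G := by
      rw [heq' t ht, inner_add_right, inner_sub_right, real_inner_smul_right,
        inner_discLap, inner_Fpow σ hσ, ← hGdef, real_inner_self_eq_norm_sq, ← hyy]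
      have : (∑ κ : Fin N, ⟪fdiff κ (φ t), fdiff κ (φ t)⟫_ℝ) = K := by
        rw [hKdef]
        exact Finset.sum_congr rfl fun κ _ => real_inner_self_eq_norm_sq _
      rw [this]
      try ring
    have hc_ge : (2*σ+4) * ‖φ' t‖^2 ≤ c t := by
      have : c t = 2*‖φ' t‖^2 + 2*(-K - m * y t + G) := by
        rw [hcdef]
        simp only []
        rw [hinn]
      rw [this]
      nlinarith [hG_ge, hm.le, mul_nonneg hm.le hy0, mul_nonneg hσ.le hK0,
        mul_nonneg hσ.le (mul_nonneg hm.le hy0), mul_nonneg hσ.le hφ'0]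
    refine ⟨hc_ge, ?_⟩
    have hCS : (B t)^2 ≤ 4 * (y t * ‖φ' t‖^2) := by
      have habs := abs_real_inner_le_norm (φ t) (φ' t)
      have h1 : ⟪φ t, φ' t⟫_ℝ^2 ≤ ‖φ t‖^2 * ‖φ' t‖^2 := by
        nlinarith [abs_nonneg ⟪φ t, φ' t⟫_ℝ, sq_abs ⟪φ t, φ' t⟫_ℝ,
          norm_nonneg (φ t), norm_nonneg (φ' t)]
      have hBB : B t = 2*⟪φ t, φ' t⟫_ℝ := rfl
      rw [hBB, hyy]
      nlinarith [h1]
    have h9 := mul_le_mul_of_nonneg_left hc_ge hy0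
    have h6 := mul_le_mul_of_nonneg_left hCS (by linarith : (0:ℝ) ≤ σ/2+1)
    have h7 : (σ/2+1)*(4*(y t*‖φ' t‖^2)) = y t*((2*σ+4)*‖φ' t‖^2) := by ring
    exact (h6.trans_eq h7).trans h9
  -- monotonicity: B is nondecreasing, hence positive; y nondecreasing, hence positive
  have hBcont : ContinuousOn B s := fun t ht => (hBd t ht).continuousWithinAt
  have hycont : ContinuousOn y s := fun t ht => (hyd t ht).continuousWithinAt
  have hBmono : MonotoneOn B s := by
    refine monotoneOn_of_hasDerivWithinAt_nonneg hconv hBcont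
      (fun t ht => ((hBd t (hints ht)).mono hints)) (fun t ht => ?_)
    have h := (hkey t (hints ht)).1
    nlinarith [sq_nonneg ‖φ' t‖, h, hσ.le]
  have hB0 : B 0 = 2 * ⟪φ₀, φ₁⟫_ℝ := by rw [hBdef]; simp only []; rw [hinit0, hinit1]
  have hBpos : ∀ t ∈ s, 0 < B t := by
    intro t ht
    have := hBmono h0s ht ht.1
    rw [hB0] at this
    linarith
  have hymono : MonotoneOn y s := by
    refine monotoneOn_of_hasDerivWithinAt_nonneg hconv hycont
      (fun t ht => ((hyd t (hints ht)).mono hints)) (fun t ht => (hBpos t (hints ht)).le)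
  have hy0v : y 0 = ‖φ₀‖^2 := by rw [hydef]; simp only []; rw [hinit0]
  have hφ₀ne : φ₀ ≠ 0 := by
    intro h0
    rw [h0] at hip
    simp at hip
  have hy0pos : 0 < y 0 := by
    rw [hy0v]
    exact pow_pos (norm_pos_iff.mpr hφ₀ne) 2
  have hypos : ∀ t ∈ s, 0 < y t := by
    intro t ht
    have := hymono h0s ht ht.1
    linarith
  -- the auxiliary concave function z = y^(-σ/2)
  set a : ℝ := -(σ/2) with hadef
  set z : ℝ → ℝ := fun u => y u ^ a with hzdef
  set zd : ℝ → ℝ := fun u => a * y u ^ (a-1) * B u with hzddef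
  set w : ℝ → ℝ := fun u => a * ((a-1) * y u ^ (a-2) * B u * B u + y u ^ (a-1) * c u)
    with hwdef
  have hzd : ∀ t ∈ s, HasDerivWithinAt z (zd t) s t := by
    intro t ht
    have h := (Real.hasDerivAt_rpow_const (x := y t) (p := a)
      (Or.inl (hypos t ht).ne')).comp_hasDerivWithinAt t (hyd t ht)
    exact h
  have hzdd : ∀ t ∈ s, HasDerivWithinAt zd (w t) s t := by
    intro t ht
    have hu : HasDerivWithinAt (fun u => y u ^ (a-1)) ((a-1) * y t ^ (a-2) * B t) s t := by
      have h := (Real.hasDerivAt_rpow_const (x := y t) (p := a-1)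
        (Or.inl (hypos t ht).ne')).comp_hasDerivWithinAt t (hyd t ht)
      have : a - 1 - 1 = a - 2 := by ring
      rw [this] at h
      exact h
    have h := ((hu.mul (hBd t ht)).const_mul a)
    refine (h.congr (fun u hu => ?_) ?_).congr_deriv ?_
    · simp only [hzddef, Pi.mul_apply]
      try ring
    · simp only [hzddef, Pi.mul_apply]
      try ring
    · simp only [hwdef]
      try ring
  have hwnp : ∀ t ∈ s, w t ≤ 0 := by
    intro t ht
    have hyt := hypos t ht
    have hA : 0 < y t ^ (a-2) := Real.rpow_pos_of_pos hyt _
    have e : y t ^ (a-1) = y t ^ (a-2) * y t := by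
      rw [← Real.rpow_add_one hyt.ne' (a-2)]
      congr 1
      ring
    have hkb := (hkey t ht).2
    have hw : w t = (σ/2) * (y t ^ (a-2)) * ((σ/2+1) * (B t)^2 - y t * c t) := by
      rw [hwdef]
      simp only []
      rw [e, hadef]
      ring
    rw [hw]
    apply mul_nonpos_of_nonneg_of_nonpos (by positivity)
    linarith
  -- zd is antitone
  have hzdmono : AntitoneOn zd s := by
    refine antitoneOn_of_hasDerivWithinAt_nonpos hconv
      (fun t ht => (hzdd t ht).continuousWithinAt)
      (fun t ht => ((hzdd t (hints ht)).mono hints)) (fun t ht => hwnp t (hints ht))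
  -- the tangent line bound: z t ≤ z 0 + zd 0 * t
  have htangent : ∀ t ∈ s, z t ≤ z 0 + zd 0 * t := by
    intro t ht
    have hP : ∀ u ∈ s, HasDerivWithinAt (fun v => z v - zd 0 * v) (zd u - zd 0) s u := by
      intro u hu
      have := (hzd u hu).sub ((hasDerivWithinAt_id u s).const_mul (zd 0))
      rw [mul_one] at this
      exact this
    have hPmono : AntitoneOn (fun v => z v - zd 0 * v) s := by
      refine antitoneOn_of_hasDerivWithinAt_nonpos hconv
        (fun u hu => (hP u hu).continuousWithinAt)
        (fun u hu => (hP u (hints hu)).mono hints)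
        (fun u hu => ?_)
      have := hzdmono h0s (hints hu) (hints hu).1
      linarith
    have h8 := hPmono h0s ht ht.1
    simp only [mul_zero, sub_zero] at h8
    linarith [h8]
  have hzpos : ∀ t ∈ s, 0 < z t := fun t ht => Real.rpow_pos_of_pos (hypos t ht) _
  -- conclusion
  by_contra hcon
  push_neg at hcon
  set I : ℝ := ⟪φ₀, φ₁⟫_ℝ with hIdef
  set Tstar : ℝ := ‖φ₀‖^2 / (σ * I) with hTsdef
  have hIpos : 0 < I := hip
  have hTspos : 0 < Tstar := by
    rw [hTsdef]
    exact div_pos (pow_pos (norm_pos_iff.mpr hφ₀ne) 2) (mul_pos hσ hIpos)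
  have hTss : Tstar ∈ s := ⟨hTspos.le, hcon⟩
  have hlt := (hzpos Tstar hTss).trans_le (htangent Tstar hTss)
  -- compute: z 0 + zd 0 * Tstar = 0
  have e2 : y 0 ^ (a-1) * y 0 = y 0 ^ a := by
    rw [← Real.rpow_add_one hy0pos.ne' (a-1)]
    congr 1
    ring
  have hTy : Tstar = y 0 / (σ * I) := by rw [hTsdef, hy0v]
  have hzero : z 0 + zd 0 * Tstar = 0 := by
    have hstep : a * y 0 ^ (a-1) * (2*I) * (y 0/(σ*I)) = - (y 0 ^ (a-1) * y 0) := by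
      rw [hadef]
      field_simp
    have hz0 : z 0 = y 0 ^ a := rfl
    have hzd0 : zd 0 = a * y 0 ^ (a-1) * B 0 := rfl
    rw [hz0, hzd0, hB0, hTy, hstep, e2]
    ring
  rw [hzero] at hlt
  exact lt_irrefl 0 hlt
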